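/- For any edge (i,j) ∈ E, in any execution of the maximal matching algorithm under the distributed adversarial daemon there are at most three steps in which an i,j-move is performed. -/

import Mathlib

structure Config (V : Type*) where
  p : V → Option V
  m : V → Bool

variable {V : Type*}

def PRmarried (G : SimpleGraph V) (p : V → Option V) (i : V) : Prop :=
  ∃ j, G.Adj i j ∧ p i = some j ∧ p j = some i

def PRwaiting (G : SimpleGraph V) (p : V → Option V) (i : V) : Prop :=
  ∃ j, G.Adj i j ∧ p i = some j ∧ p j ≠ some i ∧ ¬ PRmarried G p j

def PRcondemned (G : SimpleGraph V) (p : V → Option V) (i : V) : Prop :=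
  ∃ j, G.Adj i j ∧ p i = some j ∧ p j ≠ some i ∧ PRmarried G p j

def PRdead (G : SimpleGraph V) (p : V → Option V) (i : V) : Prop :=
  p i = none ∧ ∀ j, G.Adj i j → PRmarried G p j

def PRfree (G : SimpleGraph V) (p : V → Option V) (i : V) : Prop :=
  p i = none ∧ ∃ j, G.Adj i j ∧ ¬ PRmarried G p j

def Valid (G : SimpleGraph V) (C : Config V) : Prop :=
  ∀ i j, C.p i = some j → G.Adj i j

section Rules
variable [LinearOrder V]

def UpdateEnabled (G : SimpleGraph V) (C : Config V) (i : V) : Prop :=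
  ¬ (C.m i = true ↔ PRmarried G C.p i)

def MarriageEnabled (G : SimpleGraph V) (C : Config V) (i : V) : Prop :=
  (C.m i = true ↔ PRmarried G C.p i) ∧ C.p i = none ∧ ∃ j, G.Adj i j ∧ C.p j = some i

def SeductionEnabled (G : SimpleGraph V) (C : Config V) (i : V) : Prop :=
  (C.m i = true ↔ PRmarried G C.p i) ∧ C.p i = none ∧
    (∀ k, G.Adj i k → C.p k ≠ some i) ∧
    ∃ j, G.Adj i j ∧ C.p j = none ∧ i < j ∧ C.m j = false

def AbandonmentEnabled (G : SimpleGraph V) (C : Config V) (i : V) : Prop :=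
  (C.m i = true ↔ PRmarried G C.p i) ∧
    ∃ j, G.Adj i j ∧ C.p i = some j ∧ C.p j ≠ some i ∧ (C.m j = true ∨ j ≤ i)

def Eligible (G : SimpleGraph V) (C : Config V) (i : V) : Prop :=
  UpdateEnabled G C i ∨ MarriageEnabled G C i ∨ SeductionEnabled G C i ∨ AbandonmentEnabled G C i

def Stable (G : SimpleGraph V) (C : Config V) : Prop := ∀ i, ¬ Eligible G C i

def Unchanged (C C' : Config V) (i : V) : Prop := C'.p i = C.p i ∧ C'.m i = C.m i

def DoesUpdate (G : SimpleGraph V) (C C' : Config V) (i : V) : Prop :=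
  UpdateEnabled G C i ∧ C'.p i = C.p i ∧ (C'.m i = true ↔ PRmarried G C.p i)

def DoesMarriageTo (G : SimpleGraph V) (C C' : Config V) (i j : V) : Prop :=
  MarriageEnabled G C i ∧ G.Adj i j ∧ C.p j = some i ∧ C'.p i = some j ∧ C'.m i = C.m i

def DoesSeductionTo (G : SimpleGraph V) (C C' : Config V) (i j : V) : Prop :=
  SeductionEnabled G C i ∧ G.Adj i j ∧ C.p j = none ∧ i < j ∧ C.m j = false ∧
    (∀ k, G.Adj i k → C.p k = none → i < k → C.m k = false → k ≤ j) ∧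
    C'.p i = some j ∧ C'.m i = C.m i

def DoesAbandonmentFrom (G : SimpleGraph V) (C C' : Config V) (i j : V) : Prop :=
  AbandonmentEnabled G C i ∧ C.p i = some j ∧ C'.p i = none ∧ C'.m i = C.m i

def Moves (G : SimpleGraph V) (C C' : Config V) (i : V) : Prop :=
  DoesUpdate G C C' i ∨ (∃ j, DoesMarriageTo G C C' i j) ∨
    (∃ j, DoesSeductionTo G C C' i j) ∨ (∃ j, DoesAbandonmentFrom G C C' i j)

def Step (G : SimpleGraph V) (C C' : Config V) : Prop :=
  (∃ i, Moves G C C' i) ∧ ∀ i, Moves G C C' i ∨ Unchanged C C' i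

def MSAMoveTo (G : SimpleGraph V) (C C' : Config V) (i j : V) : Prop :=
  DoesMarriageTo G C C' i j ∨ DoesSeductionTo G C C' i j ∨ DoesAbandonmentFrom G C C' i j

def IJMove (G : SimpleGraph V) (C C' : Config V) (i j : V) : Prop :=
  MSAMoveTo G C C' i j ∨ MSAMoveTo G C C' j i

end Rules

set_option linter.unusedSectionVars false
set_option linter.unusedVariables false


structure LSt where
  a : Fin 3
  b : Fin 3
  mi : Bool
  mj : Bool
  Mi : Bool
  Mj : Bool
deriving DecidableEq, Fintype

def ConsL (s : LSt) : Prop :=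
  (s.a = 0 → (s.Mi = true ↔ s.b = 0)) ∧ (s.a = 1 → s.Mi = false) ∧
  (s.b = 0 → (s.Mj = true ↔ s.a = 0)) ∧ (s.b = 1 → s.Mj = false)

def IMJ (s t : LSt) : Prop :=
  (s.a = 1 ∧ s.b = 0 ∧ s.mi = false ∧ t.a = 0 ∧ t.mi = false) ∨
  (s.a = 1 ∧ s.b = 1 ∧ s.mi = false ∧ s.mj = false ∧ t.a = 0 ∧ t.mi = false)

def IAJ (s t : LSt) : Prop :=
  s.a = 0 ∧ ¬ s.b = 0 ∧ s.mi = false ∧ s.mj = true ∧ t.a = 1 ∧ t.mi = false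

def ISt (s t : LSt) : Prop :=
  (t.a = s.a ∧ t.mi = s.mi) ∨ (t.a = s.a ∧ t.mi = s.Mi) ∨ IMJ s t ∨ IAJ s t ∨
  (s.a = 1 ∧ s.mi = false ∧ t.a = 2 ∧ t.mi = false) ∨
  (s.a = 2 ∧ s.mi = false ∧ t.a = 1 ∧ t.mi = false)

def JMI (s t : LSt) : Prop :=
  s.b = 1 ∧ s.a = 0 ∧ s.mj = false ∧ t.b = 0 ∧ t.mj = false

def JAI (s t : LSt) : Prop :=
  s.b = 0 ∧ ¬ s.a = 0 ∧ s.mj = false ∧ t.b = 1 ∧ t.mj = false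

def JSt (s t : LSt) : Prop :=
  (t.b = s.b ∧ t.mj = s.mj) ∨ (t.b = s.b ∧ t.mj = s.Mj) ∨ JMI s t ∨ JAI s t ∨
  (s.b = 1 ∧ s.mj = false ∧ t.b = 2 ∧ t.mj = false) ∨
  (s.b = 2 ∧ s.mj = false ∧ t.b = 1 ∧ t.mj = false)

def RelL (s t : LSt) : Prop :=
  ConsL s ∧ ConsL t ∧ (s.Mi = true → t.Mi = true) ∧ (s.Mj = true → t.Mj = true) ∧
  ISt s t ∧ JSt s t

def RelIJ (s t : LSt) : Prop :=
  RelL s t ∧ (IMJ s t ∨ IAJ s t ∨ JMI s t ∨ JAI s t)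

def phiL (s : LSt) : ℕ :=
  if s.a = 0 then (if s.b = 0 then 0 else if s.mj = true ∧ s.Mj = false then 3 else 1)
  else if s.a = 2 ∧ s.Mi = true then (if s.b = 0 then 1 else 0)
  else if s.b = 0 then 3 else if s.b = 1 then 2 else if s.Mj = true then 0 else 2

instance : DecidablePred ConsL := fun _ => by unfold ConsL; infer_instance
instance : ∀ s t, Decidable (IMJ s t) := fun _ _ => by unfold IMJ; infer_instance
instance : ∀ s t, Decidable (IAJ s t) := fun _ _ => by unfold IAJ; infer_instance
instance : ∀ s t, Decidable (ISt s t) := fun _ _ => by unfold ISt; infer_instance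
instance : ∀ s t, Decidable (JMI s t) := fun _ _ => by unfold JMI; infer_instance
instance : ∀ s t, Decidable (JAI s t) := fun _ _ => by unfold JAI; infer_instance
instance : ∀ s t, Decidable (JSt s t) := fun _ _ => by unfold JSt; infer_instance
instance : ∀ s t, Decidable (RelL s t) := fun _ _ => by unfold RelL; infer_instance
instance : ∀ s t, Decidable (RelIJ s t) := fun _ _ => by unfold RelIJ; infer_instance

set_option maxRecDepth 100000

lemma phi_mono : ∀ s t : LSt, RelL s t → phiL t ≤ phiL s := by decide
lemma phi_strict : ∀ s t : LSt, RelIJ s t → phiL t < phiL s := by decide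
lemma phi_le_three : ∀ s : LSt, ConsL s → phiL s ≤ 3 := by decide


section Sem
variable [LinearOrder V] (G : SimpleGraph V) (i j : V)

lemma not_married_of_none {C : Config V} {v : V} (h : C.p v = none) :
    ¬ PRmarried G C.p v := by
  rintro ⟨k, _, hk, -⟩; rw [h] at hk; exact nomatch hk

lemma married_iff_of_some {C : Config V} {v k : V} (hadj : G.Adj v k) (h : C.p v = some k) :
    (PRmarried G C.p v ↔ C.p k = some v) := by
  constructor
  · rintro ⟨k', -, hk', hk'v⟩
    rw [h] at hk'; obtain rfl : k = k' := Option.some_inj.mp hk'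
    exact hk'v
  · intro hkv; exact ⟨k, hadj, h, hkv⟩

lemma mflag_false {C : Config V} {v : V} (hg : C.m v = true ↔ PRmarried G C.p v)
    (hn : ¬ PRmarried G C.p v) : C.m v = false :=
  Bool.eq_false_iff.mpr (fun h => hn (hg.mp h))

lemma p_frozen {C C' : Config V} (hstep : Step G C C') {v k : V}
    (hv : C.p v = some k) (hk : C.p k = some v) : C'.p v = C.p v := by
  rcases hstep.2 v with hmv | hu
  · rcases hmv with hU | ⟨w, hM⟩ | ⟨w, hS⟩ | ⟨w, hA⟩
    · exact hU.2.1
    · rw [hM.1.2.1] at hv; exact nomatch hv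
    · rw [hS.1.2.1] at hv; exact nomatch hv
    · obtain ⟨-, w', -, hw', hne, -⟩ := hA.1
      rw [hv] at hw'; obtain rfl : k = w' := Option.some_inj.mp hw'
      exact absurd hk hne
  · exact hu.1

lemma married_persist {C C' : Config V} (hstep : Step G C C') {v : V}
    (h : PRmarried G C.p v) : PRmarried G C'.p v := by
  obtain ⟨k, hadj, hv, hk⟩ := h
  exact ⟨k, hadj, by rw [p_frozen G hstep hv hk, hv],
    by rw [p_frozen G hstep hk hv, hk]⟩


open Classical in
noncomputable def enc (C : Config V) : LSt where
  a := if C.p i = some j then 0 else if C.p i = none then 1 else 2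
  b := if C.p j = some i then 0 else if C.p j = none then 1 else 2
  mi := C.m i
  mj := C.m j
  Mi := decide (PRmarried G C.p i)
  Mj := decide (PRmarried G C.p j)

variable {G i j}

lemma enc_a0 {C : Config V} : (enc G i j C).a = 0 ↔ C.p i = some j := by
  simp only [enc]
  split_ifs with h1 h2
  · exact iff_of_true rfl h1
  · exact iff_of_false (by decide) h1
  · exact iff_of_false (by decide) h1

lemma enc_a1 {C : Config V} : (enc G i j C).a = 1 ↔ C.p i = none := by
  simp only [enc]
  split_ifs with h1 h2
  · exact iff_of_false (by decide) (by rw [h1]; exact fun h => nomatch h)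
  · exact iff_of_true rfl h2
  · exact iff_of_false (by decide) h2

lemma enc_a2 {C : Config V} (h1 : C.p i ≠ some j) (h2 : C.p i ≠ none) :
    (enc G i j C).a = 2 := by
  simp only [enc]; rw [if_neg h1, if_neg h2]

lemma enc_b0 {C : Config V} : (enc G i j C).b = 0 ↔ C.p j = some i := by
  simp only [enc]
  split_ifs with h1 h2
  · exact iff_of_true rfl h1
  · exact iff_of_false (by decide) h1
  · exact iff_of_false (by decide) h1

lemma enc_b1 {C : Config V} : (enc G i j C).b = 1 ↔ C.p j = none := by
  simp only [enc]
  split_ifs with h1 h2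
  · exact iff_of_false (by decide) (by rw [h1]; exact fun h => nomatch h)
  · exact iff_of_true rfl h2
  · exact iff_of_false (by decide) h2

lemma enc_b2 {C : Config V} (h1 : C.p j ≠ some i) (h2 : C.p j ≠ none) :
    (enc G i j C).b = 2 := by
  simp only [enc]; rw [if_neg h1, if_neg h2]

open Classical in
lemma enc_Mi {C : Config V} : (enc G i j C).Mi = true ↔ PRmarried G C.p i := by
  simp only [enc]; exact decide_eq_true_iff

open Classical in
lemma enc_Mj {C : Config V} : (enc G i j C).Mj = true ↔ PRmarried G C.p j := by
  simp only [enc]; exact decide_eq_true_iff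

lemma enc_mi {C : Config V} : (enc G i j C).mi = C.m i := rfl
lemma enc_mj {C : Config V} : (enc G i j C).mj = C.m j := rfl

lemma bool_eq_decide {P : Prop} [inst : Decidable P] {b : Bool} (h : b = true ↔ P) :
    b = decide P := by
  by_cases hP : P
  · rw [h.mpr hP, decide_eq_true hP]
  · exact (Bool.eq_false_iff.mpr (fun hb => hP (h.mp hb))).trans (decide_eq_false hP).symm

lemma cons_enc (hadj : G.Adj i j) (C : Config V) : ConsL (enc G i j C) := by
  refine ⟨?_, ?_, ?_, ?_⟩
  · intro ha
    rw [enc_Mi, enc_b0, married_iff_of_some G hadj (enc_a0.mp ha)]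
  · intro ha
    exact Bool.eq_false_iff.mpr
      (fun hb => not_married_of_none G (enc_a1.mp ha) (enc_Mi.mp hb))
  · intro hb
    rw [enc_Mj, enc_a0, married_iff_of_some G hadj.symm (enc_b0.mp hb)]
  · intro hb
    exact Bool.eq_false_iff.mpr
      (fun hm => not_married_of_none G (enc_b1.mp hb) (enc_Mj.mp hm))

-- i's moves toward j
lemma imj_of_marriage {C C' : Config V} (h : DoesMarriageTo G C C' i j) :
    IMJ (enc G i j C) (enc G i j C') := by
  obtain ⟨⟨hg, hnone, -⟩, -, hpj, hp', hm'⟩ := h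
  have hmi : C.m i = false := mflag_false G hg (not_married_of_none G hnone)
  exact Or.inl ⟨enc_a1.mpr hnone, enc_b0.mpr hpj, hmi,
    enc_a0.mpr hp', by rw [enc_mi, hm', hmi]⟩

lemma imj_of_seduction {C C' : Config V} (h : DoesSeductionTo G C C' i j) :
    IMJ (enc G i j C) (enc G i j C') := by
  obtain ⟨⟨hg, hnone, -, -⟩, -, hpj, -, hmj, -, hp', hm'⟩ := h
  have hmi : C.m i = false := mflag_false G hg (not_married_of_none G hnone)
  exact Or.inr ⟨enc_a1.mpr hnone, enc_b1.mpr hpj, hmi, hmj,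
    enc_a0.mpr hp', by rw [enc_mi, hm', hmi]⟩

lemma iaj_of_abandonment {C C' : Config V} (hij : i < j)
    (h : DoesAbandonmentFrom G C C' i j) : IAJ (enc G i j C) (enc G i j C') := by
  obtain ⟨⟨hg, k, -, hpk, hne, hcond⟩, hpi, hp', hm'⟩ := h
  rw [hpi] at hpk; obtain rfl : j = k := Option.some_inj.mp hpk
  have hnm : ¬ PRmarried G C.p i := fun hm => hne ((married_iff_of_some G
    (by obtain ⟨k', ha, hk', -⟩ := hm; rw [hpi] at hk';
        obtain rfl : j = k' := Option.some_inj.mp hk'; exact ha) hpi).mp hm)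
  have hmi : C.m i = false := mflag_false G hg hnm
  have hmj : C.m j = true := hcond.resolve_right (fun hle => absurd hij (not_lt.mpr hle))
  exact ⟨enc_a0.mpr hpi, fun hb => hne (enc_b0.mp hb), hmi, hmj,
    enc_a1.mpr hp', by rw [enc_mi, hm', hmi]⟩

-- j's moves toward i
lemma jmi_of_marriage {C C' : Config V} (h : DoesMarriageTo G C C' j i) :
    JMI (enc G i j C) (enc G i j C') := by
  obtain ⟨⟨hg, hnone, -⟩, -, hpi, hp', hm'⟩ := h
  have hmj : C.m j = false := mflag_false G hg (not_married_of_none G hnone)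
  exact ⟨enc_b1.mpr hnone, enc_a0.mpr hpi, hmj,
    enc_b0.mpr hp', by rw [enc_mj, hm', hmj]⟩

lemma jai_of_abandonment {C C' : Config V} (h : DoesAbandonmentFrom G C C' j i) :
    JAI (enc G i j C) (enc G i j C') := by
  obtain ⟨⟨hg, k, -, hpk, hne, -⟩, hpj, hp', hm'⟩ := h
  rw [hpj] at hpk; obtain rfl : i = k := Option.some_inj.mp hpk
  have hnm : ¬ PRmarried G C.p j := fun hm => hne ((married_iff_of_some G
    (by obtain ⟨k', ha, hk', -⟩ := hm; rw [hpj] at hk';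
        obtain rfl : i = k' := Option.some_inj.mp hk'; exact ha) hpj).mp hm)
  have hmj : C.m j = false := mflag_false G hg hnm
  exact ⟨enc_b0.mpr hpj, fun ha => hne (enc_a0.mp ha), hmj,
    enc_b1.mpr hp', by rw [enc_mj, hm', hmj]⟩


lemma istep_enc (hij : i < j) {C C' : Config V} (hstep : Step G C C') :
    ISt (enc G i j C) (enc G i j C') := by
  rcases hstep.2 i with (hU | ⟨k, hM⟩ | ⟨k, hS⟩ | ⟨k, hA⟩) | hu
  · exact Or.inr (Or.inl ⟨by simp only [enc]; rw [hU.2.1], bool_eq_decide (inst := Classical.propDecidable _) hU.2.2⟩)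
  · by_cases hk : k = j
    · exact Or.inr (Or.inr (Or.inl (imj_of_marriage (hk ▸ hM))))
    · obtain ⟨⟨hg, hnone, -⟩, -, -, hp', hm'⟩ := hM
      have hmi : C.m i = false := mflag_false G hg (not_married_of_none G hnone)
      refine Or.inr (Or.inr (Or.inr (Or.inr (Or.inl
        ⟨enc_a1.mpr hnone, hmi, ?_, ?_⟩))))
      · exact enc_a2 (by rw [hp']; simp [hk]) (by rw [hp']; exact fun h => nomatch h)
      · rw [enc_mi, hm', hmi]
  · by_cases hk : k = j
    · exact Or.inr (Or.inr (Or.inl (imj_of_seduction (hk ▸ hS))))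
    · obtain ⟨⟨hg, hnone, -, -⟩, -, -, -, -, -, hp', hm'⟩ := hS
      have hmi : C.m i = false := mflag_false G hg (not_married_of_none G hnone)
      refine Or.inr (Or.inr (Or.inr (Or.inr (Or.inl
        ⟨enc_a1.mpr hnone, hmi, ?_, ?_⟩))))
      · exact enc_a2 (by rw [hp']; simp [hk]) (by rw [hp']; exact fun h => nomatch h)
      · rw [enc_mi, hm', hmi]
  · by_cases hk : k = j
    · exact Or.inr (Or.inr (Or.inr (Or.inl (iaj_of_abandonment hij (hk ▸ hA)))))
    · obtain ⟨⟨hg, k', -, hpk', hne, -⟩, hpik, hp', hm'⟩ := hA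
      rw [hpik] at hpk'; obtain rfl : k = k' := Option.some_inj.mp hpk'
      have hnm : ¬ PRmarried G C.p i := by
        rintro ⟨k'', -, hk'', hrev⟩
        rw [hpik] at hk''; obtain rfl : k = k'' := Option.some_inj.mp hk''
        exact hne hrev
      have hmi : C.m i = false := mflag_false G hg hnm
      refine Or.inr (Or.inr (Or.inr (Or.inr (Or.inr
        ⟨?_, hmi, enc_a1.mpr hp', by rw [enc_mi, hm', hmi]⟩))))
      · exact enc_a2 (by rw [hpik]; simp [hk]) (by rw [hpik]; exact fun h => nomatch h)
  · exact Or.inl ⟨by simp only [enc]; rw [hu.1], by rw [enc_mi, enc_mi, hu.2]⟩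

lemma jstep_enc (hij : i < j) {C C' : Config V} (hstep : Step G C C') :
    JSt (enc G i j C) (enc G i j C') := by
  rcases hstep.2 j with (hU | ⟨k, hM⟩ | ⟨k, hS⟩ | ⟨k, hA⟩) | hu
  · exact Or.inr (Or.inl ⟨by simp only [enc]; rw [hU.2.1], bool_eq_decide (inst := Classical.propDecidable _) hU.2.2⟩)
  · by_cases hk : k = i
    · exact Or.inr (Or.inr (Or.inl (jmi_of_marriage (hk ▸ hM))))
    · obtain ⟨⟨hg, hnone, -⟩, -, -, hp', hm'⟩ := hM
      have hmj : C.m j = false := mflag_false G hg (not_married_of_none G hnone)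
      refine Or.inr (Or.inr (Or.inr (Or.inr (Or.inl
        ⟨enc_b1.mpr hnone, hmj, ?_, ?_⟩))))
      · exact enc_b2 (by rw [hp']; simp [hk]) (by rw [hp']; exact fun h => nomatch h)
      · rw [enc_mj, hm', hmj]
  · by_cases hk : k = i
    · exact absurd (hk ▸ hS).2.2.2.1 (lt_asymm hij)
    · obtain ⟨⟨hg, hnone, -, -⟩, -, -, -, -, -, hp', hm'⟩ := hS
      have hmj : C.m j = false := mflag_false G hg (not_married_of_none G hnone)
      refine Or.inr (Or.inr (Or.inr (Or.inr (Or.inl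
        ⟨enc_b1.mpr hnone, hmj, ?_, ?_⟩))))
      · exact enc_b2 (by rw [hp']; simp [hk]) (by rw [hp']; exact fun h => nomatch h)
      · rw [enc_mj, hm', hmj]
  · by_cases hk : k = i
    · exact Or.inr (Or.inr (Or.inr (Or.inl (jai_of_abandonment (hk ▸ hA)))))
    · obtain ⟨⟨hg, k', -, hpk', hne, -⟩, hpjk, hp', hm'⟩ := hA
      rw [hpjk] at hpk'; obtain rfl : k = k' := Option.some_inj.mp hpk'
      have hnm : ¬ PRmarried G C.p j := by
        rintro ⟨k'', -, hk'', hrev⟩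
        rw [hpjk] at hk''; obtain rfl : k = k'' := Option.some_inj.mp hk''
        exact hne hrev
      have hmj : C.m j = false := mflag_false G hg hnm
      refine Or.inr (Or.inr (Or.inr (Or.inr (Or.inr
        ⟨?_, hmj, enc_b1.mpr hp', by rw [enc_mj, hm', hmj]⟩))))
      · exact enc_b2 (by rw [hpjk]; simp [hk]) (by rw [hpjk]; exact fun h => nomatch h)
  · exact Or.inl ⟨by simp only [enc]; rw [hu.1], by rw [enc_mj, enc_mj, hu.2]⟩

lemma rel_enc (hadj : G.Adj i j) (hij : i < j) {C C' : Config V} (hstep : Step G C C') :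
    RelL (enc G i j C) (enc G i j C') :=
  ⟨cons_enc hadj C, cons_enc hadj C',
   fun h => enc_Mi.mpr (married_persist G hstep (enc_Mi.mp h)),
   fun h => enc_Mj.mpr (married_persist G hstep (enc_Mj.mp h)),
   istep_enc hij hstep, jstep_enc hij hstep⟩

lemma relij_enc (hadj : G.Adj i j) (hij : i < j) {C C' : Config V} (hstep : Step G C C')
    (hm : IJMove G C C' i j) : RelIJ (enc G i j C) (enc G i j C') := by
  refine ⟨rel_enc hadj hij hstep, ?_⟩
  rcases hm with (h | h | h) | (h | h | h)
  · exact Or.inl (imj_of_marriage h)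
  · exact Or.inl (imj_of_seduction h)
  · exact Or.inr (Or.inl (iaj_of_abandonment hij h))
  · exact Or.inr (Or.inr (Or.inl (jmi_of_marriage h)))
  · exact absurd h.2.2.2.1 (lt_asymm hij)
  · exact Or.inr (Or.inr (Or.inr (jai_of_abandonment h)))

end Sem

lemma count_le {P : ℕ → Prop} [DecidablePred P] (f : ℕ → ℕ) (L : ℕ)
    (h1 : ∀ t, t < L → f (t + 1) ≤ f t) (h2 : ∀ t, t < L → P t → f (t + 1) < f t) :
    ((Finset.range L).filter P).card + f L ≤ f 0 := by
  induction L with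
  | zero => simp
  | succ n ih =>
    have hn1 := h1 n (by omega)
    have ihn := ih (fun t ht => h1 t (by omega)) (fun t ht => h2 t (by omega))
    rw [Finset.range_add_one, Finset.filter_insert]
    by_cases hP : P n
    · rw [if_pos hP, Finset.card_insert_of_notMem (by simp)]
      have := h2 n (by omega) hP
      omega
    · rw [if_neg hP]; omega

open scoped Classical in
theorem ij_moves_aux [LinearOrder V] (G : SimpleGraph V)
    (C : ℕ → Config V) (L : ℕ) (hstep : ∀ t, t < L → Step G (C t) (C (t+1)))
    (i j : V) (hadj : G.Adj i j) (hij : i < j) :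
    ((Finset.range L).filter (fun t => IJMove G (C t) (C (t+1)) i j)).card ≤ 3 := by
  have key := count_le (P := fun t => IJMove G (C t) (C (t+1)) i j)
    (fun t => phiL (enc G i j (C t))) L
    (fun t ht => phi_mono _ _ (rel_enc hadj hij (hstep t ht)))
    (fun t ht hm => phi_strict _ _ (relij_enc hadj hij (hstep t ht) hm))
  have h3 := phi_le_three _ (cons_enc hadj (C 0))
  omega

open scoped Classical in
theorem ij_moves_at_most_three [Fintype V] [LinearOrder V] (G : SimpleGraph V)
    (C : ℕ → Config V) (L : ℕ) (hstep : ∀ t, t < L → Step G (C t) (C (t+1)))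
    (hvalid : Valid G (C 0))
    (i j : V) (hadj : G.Adj i j) :
    ((Finset.range L).filter (fun t => IJMove G (C t) (C (t+1)) i j)).card ≤ 3 := by
  rcases lt_trichotomy i j with hij | rfl | hij
  · exact ij_moves_aux G C L hstep i j hadj hij
  · exact absurd rfl hadj.ne
  · rw [show ((Finset.range L).filter (fun t => IJMove G (C t) (C (t+1)) i j))
        = ((Finset.range L).filter (fun t => IJMove G (C t) (C (t+1)) j i)) from
      Finset.filter_congr (fun t _ => or_comm)]
    exact ij_moves_aux G C L hstep j i hadj.symm hij
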